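/- Let α₋ < α₊ be real numbers, set √z = (α₊ − α₋)/4 and z = ((α₊ − α₋)/4)², and define R(s) = √((s − α₋)(s − α₊)) for s ≥ α₊. Then for every real y > α₊, the improper integral ∫_y^∞ ds/((s − α₋)²·R(s)) converges and equals (1/(12z))·( 1 − (y − α₊)/R(y) − 2√z·(y − α₊)/((y − α₋)·R(y)) ). -/

import Mathlib

open MeasureTheory

/-- Let `α₋ < α₊`, `√z = (α₊ - α₋)/4`, `z = ((α₊ - α₋)/4)²`,
and `R(s) = √((s - α₋)(s - α₊))`.  Then for every `y > α₊` the improper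
integral `∫_y^∞ ds/((s - α₋)²·R(s))` converges and equals
`(1/(12z))·(1 - (y - α₊)/R(y) - 2√z·(y - α₊)/((y - α₋)·R(y)))`. -/
theorem stmt13 (αm αp : ℝ) (hα : αm < αp) (y : ℝ) (hy : αp < y) :
    IntegrableOn (fun s => 1 / ((s - αm) ^ 2 * Real.sqrt ((s - αm) * (s - αp))))
        (Set.Ioi y) volume ∧
      ∫ s in Set.Ioi y, 1 / ((s - αm) ^ 2 * Real.sqrt ((s - αm) * (s - αp))) =
        1 / (12 * ((αp - αm) / 4) ^ 2) *
          (1 - (y - αp) / Real.sqrt ((y - αm) * (y - αp)) -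
            2 * ((αp - αm) / 4) * (y - αp) /
              ((y - αm) * Real.sqrt ((y - αm) * (y - αp)))) := by
  have hαy : αm < y := hα.trans hy
  set R : ℝ → ℝ := fun s => Real.sqrt ((s - αm) * (s - αp)) with hRdef
  set c : ℝ := 1 / (12 * ((αp - αm) / 4) ^ 2) with hcdef
  set k : ℝ := 2 * ((αp - αm) / 4) with hkdef
  set g : ℝ → ℝ := fun s =>
    -c * (1 - (s - αp) / R s - k * (s - αp) / ((s - αm) * R s)) with hgdef
  have hRpos : ∀ x, y ≤ x → 0 < R x := by
    intro x hx
    have h1 : 0 < x - αm := by linarith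
    have h2 : 0 < x - αp := by linarith
    exact Real.sqrt_pos.mpr (mul_pos h1 h2)
  -- derivative
  have hderiv : ∀ x ∈ Set.Ioi y,
      HasDerivAt g (1 / ((x - αm) ^ 2 * R x)) x := by
    intro x hx
    have hxy : y < x := hx
    have h1 : 0 < x - αm := by linarith
    have h2 : 0 < x - αp := by linarith
    have hrpos : 0 < R x := hRpos x hxy.le
    have hR2 : R x ^ 2 = (x - αm) * (x - αp) :=
      Real.sq_sqrt (by positivity)
    have hu : HasDerivAt (fun s => (s - αm) * (s - αp))
        (1 * (x - αp) + (x - αm) * 1) x :=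
      ((hasDerivAt_id x).sub_const αm).mul ((hasDerivAt_id x).sub_const αp)
    have hRd : HasDerivAt R
        ((1 * (x - αp) + (x - αm) * 1) / (2 * Real.sqrt ((x - αm) * (x - αp)))) x :=
      hu.sqrt (by positivity)
    have hRx : Real.sqrt ((x - αm) * (x - αp)) = R x := rfl
    rw [hRx] at hRd
    have h1' : HasDerivAt (fun s => (s - αp) / R s)
        ((1 * R x - (x - αp) * ((1 * (x - αp) + (x - αm) * 1) / (2 * R x))) / R x ^ 2) x :=
      ((hasDerivAt_id x).sub_const αp).div hRd hrpos.ne'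
    have hden : HasDerivAt (fun s => (s - αm) * R s)
        (1 * R x + (x - αm) * ((1 * (x - αp) + (x - αm) * 1) / (2 * R x))) x :=
      ((hasDerivAt_id x).sub_const αm).mul hRd
    have hnum : HasDerivAt (fun s => k * (s - αp)) (k * 1) x :=
      ((hasDerivAt_id x).sub_const αp).const_mul k
    have h2' : HasDerivAt (fun s => k * (s - αp) / ((s - αm) * R s))
        ((k * 1 * ((x - αm) * R x) - k * (x - αp) *
            (1 * R x + (x - αm) * ((1 * (x - αp) + (x - αm) * 1) / (2 * R x)))) /
          ((x - αm) * R x) ^ 2) x :=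
      hnum.div hden (by positivity)
    have hg : HasDerivAt g
        (-c * ((0 - (1 * R x - (x - αp) * ((1 * (x - αp) + (x - αm) * 1) / (2 * R x))) / R x ^ 2) -
          (k * 1 * ((x - αm) * R x) - k * (x - αp) *
            (1 * R x + (x - αm) * ((1 * (x - αp) + (x - αm) * 1) / (2 * R x)))) /
          ((x - αm) * R x) ^ 2)) x := by
      have := (((hasDerivAt_const x (1:ℝ)).sub h1').sub h2').const_mul (-c)
      convert this using 1
      all_goals rfl
    convert hg using 1
    have hd : 0 < αp - αm := by linarith
    rw [hcdef, hkdef]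
    have hb : x - αp = R x ^ 2 / (x - αm) := by
      rw [hR2]; field_simp
    rw [hb]
    have hab : αp - αm = ((x - αm) ^ 2 - R x ^ 2) / (x - αm) := by
      rw [hR2]; field_simp; ring
    rw [hab]
    have hne : (x - αm) ^ 2 - R x ^ 2 ≠ 0 := by
      rw [hR2]; nlinarith
    field_simp
    ring
  have hpos : ∀ x ∈ Set.Ioi y, 0 ≤ 1 / ((x - αm) ^ 2 * R x) := by
    intro x hx
    have := hRpos x (le_of_lt hx)
    positivity
  -- continuity at y (within Ici y)
  have hRc : Continuous R := by
    apply Real.continuous_sqrt.comp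
    continuity
  have hcont : ContinuousOn g (Set.Ici y) := by
    apply ContinuousOn.mul continuousOn_const
    apply ContinuousOn.sub
    · apply ContinuousOn.sub continuousOn_const
      exact ContinuousOn.div (by fun_prop) hRc.continuousOn
        (fun s hs => (hRpos s hs).ne')
    · exact ContinuousOn.div (by fun_prop)
        (ContinuousOn.mul (by fun_prop) hRc.continuousOn)
        (fun s hs => by
          have h1 : 0 < s - αm := by have := hs.out; linarith
          exact (mul_pos h1 (hRpos s hs)).ne')
  have hcw : ContinuousWithinAt g (Set.Ici y) y :=
    hcont y Set.self_mem_Ici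
  -- limit at infinity
  have hT1 : Filter.Tendsto (fun s => (s - αp) / R s) Filter.atTop (nhds 1) := by
    have hq : Filter.Tendsto (fun s : ℝ => (s - αp) / (s - αm)) Filter.atTop (nhds 1) := by
      have h0 : Filter.Tendsto (fun s : ℝ => (s - αm)⁻¹) Filter.atTop (nhds 0) :=
        Filter.Tendsto.inv_tendsto_atTop
          (Filter.tendsto_atTop_add_const_right _ (-αm) Filter.tendsto_id)
      have := (tendsto_const_nhds (x := (1:ℝ)) (f := Filter.atTop)).add
        (h0.const_mul (αm - αp))
      simp only [mul_zero, add_zero] at this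
      apply this.congr'
      filter_upwards [Filter.eventually_gt_atTop αm] with s hs
      have : s - αm ≠ 0 := by linarith
      field_simp
      ring
    have hs1 : Filter.Tendsto (fun s : ℝ => Real.sqrt ((s - αp) / (s - αm)))
        Filter.atTop (nhds 1) := by
      have := (Real.continuous_sqrt.tendsto 1).comp hq
      simpa [Function.comp_def] using this
    apply hs1.congr'
    filter_upwards [Filter.eventually_gt_atTop αp] with s hs
    have h1 : (0:ℝ) < s - αm := by linarith
    have h2 : (0:ℝ) < s - αp := by linarith
    rw [Real.sqrt_div h2.le, hRdef]
    simp only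
    rw [Real.sqrt_mul h1.le]
    rw [div_eq_div_iff (by positivity) (by positivity)]
    linear_combination Real.sqrt (s - αm) * Real.mul_self_sqrt h2.le
  have hT2 : Filter.Tendsto (fun s => k * (s - αp) / ((s - αm) * R s))
      Filter.atTop (nhds 0) := by
    have h0 : Filter.Tendsto (fun s : ℝ => k * (s - αm)⁻¹) Filter.atTop (nhds 0) := by
      have h0' : Filter.Tendsto (fun s : ℝ => (s - αm)⁻¹) Filter.atTop (nhds 0) :=
        Filter.Tendsto.inv_tendsto_atTop
          (Filter.tendsto_atTop_add_const_right _ (-αm) Filter.tendsto_id)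
      simpa using h0'.const_mul k
    have := h0.mul hT1
    rw [zero_mul] at this
    apply this.congr
    intro s
    rw [← div_eq_mul_inv, div_mul_div_comm]
  have htend : Filter.Tendsto g Filter.atTop (nhds 0) := by
    have := ((tendsto_const_nhds (x := (1:ℝ)) (f := Filter.atTop)).sub hT1).sub hT2
    have h2 := this.const_mul (-c)
    have h3 : -c * (1 - 1 - 0) = 0 := by ring
    rw [h3] at h2
    exact h2
  have hInt := integrableOn_Ioi_deriv_of_nonneg hcw hderiv hpos htend
  have hEq := integral_Ioi_of_hasDerivAt_of_nonneg hcw hderiv hpos htend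
  refine ⟨hInt, ?_⟩
  rw [hEq, hgdef]
  simp only
  ring
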